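/- Let θ be an infinite cardinal. If there is a (θ,θ)-good set, then there is a (θ,θ)-good set A such that each H_{βα}(A) is finite, closed downward, and symmetric, i.e., H_{βα}(A) = {(n,m) : (m,n) ∈ H_{αβ}(A)} for all α, β < θ. -/

import Mathlib

open Cardinal Set

universe u

/-- `f ≤⁺ g`: there is `k` such that for every `α`, `f α ≤ g α` or `f α ≤ k`. -/
def LePlus {I : Type u} (f g : I → ℕ) : Prop :=
  ∃ k : ℕ, ∀ α, f α ≤ g α ∨ f α ≤ k

/-- `f ≤* g`: `f α ≤ g α` for all but finitely many `α`. -/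
def LeStar {I : Type u} (f g : I → ℕ) : Prop :=
  {α | ¬ f α ≤ g α}.Finite

/-- The trace `V_g × U_f` of a basic neighborhood of `(∞,∞)` in `F_θ × F_λ`. -/
def VU {Θ Λ : Type u} (g : Θ → ℕ) (f : Λ → ℕ) : Set ((Θ × ℕ) × (Λ × ℕ)) :=
  {p | g p.1.1 < p.1.2 ∧ f p.2.1 < p.2.2}

/-- `A` is a `(θ,θ)`-good set, where `θ = #Θ` (clauses (a)–(d)). -/
def IsGoodSelf {Θ : Type u} (A : Set ((Θ × ℕ) × (Θ × ℕ))) : Prop :=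
  (∀ g f : Θ → ℕ, (A ∩ VU g f).Nonempty) ∧
  (∀ B ⊆ A, #B < #Θ → ∃ g f : Θ → ℕ, B ∩ VU g f = ∅) ∧
  (∀ E : Set Θ, #E < #Θ → ∃ g f : Θ → ℕ, A ∩ {p | p.2.1 ∈ E} ∩ VU g f = ∅) ∧
  (∀ F : Set Θ, #F < #Θ → ∃ g f : Θ → ℕ, A ∩ {p | p.1.1 ∈ F} ∩ VU g f = ∅)

/-- `H_{βα}(A) = {(m,n) : (⟨β,m⟩,⟨α,n⟩) ∈ A}`. -/
def Hset {Θ Λ : Type u} (A : Set ((Θ × ℕ) × (Λ × ℕ))) (β : Θ) (α : Λ) :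
    Set (ℕ × ℕ) :=
  {q | ((β, q.1), (α, q.2)) ∈ A}

/-- A set of pairs of naturals is closed downward. -/
def Cdw (H : Set (ℕ × ℕ)) : Prop :=
  ∀ m n m' n', (m, n) ∈ H → m' ≤ m → n' ≤ n → (m', n') ∈ H

/-- If there is a `(θ,θ)`-good set, then there is one all of whose sets
`H_{βα}` are finite, closed downward, and symmetric. -/
theorem statement14 {Θ : Type u} [Infinite Θ]
    (h : ∃ A : Set ((Θ × ℕ) × (Θ × ℕ)), IsGoodSelf A) :
    ∃ A : Set ((Θ × ℕ) × (Θ × ℕ)), IsGoodSelf A ∧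
      ∀ β α : Θ, (Hset A β α).Finite ∧ Cdw (Hset A β α) ∧
        Hset A β α = {q : ℕ × ℕ | (q.2, q.1) ∈ Hset A α β} := by
  classical
  obtain ⟨A, ha, hb, hc, hd⟩ := h
  have hsing : ∀ x : Θ, #({x} : Set Θ) < #Θ := by
    intro x
    rw [Cardinal.mk_singleton]
    exact lt_of_lt_of_le Cardinal.one_lt_aleph0 (Cardinal.aleph0_le_mk Θ)
  choose gc fc hgc using fun α : Θ => hc {α} (hsing α)
  choose gd fd hgd using fun β : Θ => hd {β} (hsing β)
  set A2 : Set ((Θ × ℕ) × (Θ × ℕ)) :=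
    A ∩ VU (fun β => gd β β) (fun α => fc α α) with hA2
  have hA2A : A2 ⊆ A := inter_subset_left
  have hbound : ∀ p ∈ A2, p.1.2 ≤ gc p.2.1 p.1.1 ∧ p.2.2 ≤ fd p.1.1 p.2.1 := by
    rintro p ⟨hpA, hp1, hp2⟩
    constructor
    · by_contra hcon
      have hmem : p ∈ A ∩ {q | q.2.1 ∈ ({p.2.1} : Set Θ)} ∩ VU (gc p.2.1) (fc p.2.1) :=
        ⟨⟨hpA, rfl⟩, not_le.mp hcon, hp2⟩
      rw [hgc p.2.1] at hmem
      exact hmem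
    · by_contra hcon
      have hmem : p ∈ A ∩ {q | q.1.1 ∈ ({p.1.1} : Set Θ)} ∩ VU (gd p.1.1) (fd p.1.1) :=
        ⟨⟨hpA, rfl⟩, hp1, not_le.mp hcon⟩
      rw [hgd p.1.1] at hmem
      exact hmem
  set As : Set ((Θ × ℕ) × (Θ × ℕ)) :=
    {p | ∃ m' n', p.1.2 ≤ m' ∧ p.2.2 ≤ n' ∧
        (((p.1.1, m'), (p.2.1, n')) ∈ A2 ∨ ((p.2.1, n'), (p.1.1, m')) ∈ A2)} with hAs
  have hA2As : A2 ⊆ As := by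
    rintro ⟨⟨β, m⟩, ⟨α, n⟩⟩ hp
    exact ⟨m, n, le_rfl, le_rfl, Or.inl hp⟩
  refine ⟨As, ⟨?_, ?_, ?_, ?_⟩, ?_⟩
  · -- clause (a)
    intro g f
    obtain ⟨p, hpA, hp1, hp2⟩ :=
      ha (fun x => max (g x) (gd x x)) (fun x => max (f x) (fc x x))
    exact ⟨p, hA2As ⟨hpA, lt_of_le_of_lt (le_max_right _ _) hp1,
      lt_of_le_of_lt (le_max_right _ _) hp2⟩,
      lt_of_le_of_lt (le_max_left _ _) hp1, lt_of_le_of_lt (le_max_left _ _) hp2⟩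
  · -- clause (b)
    intro B hBsub hBcard
    have key : ∀ b : ↥B, ∃ m' n',
        (b : (Θ × ℕ) × (Θ × ℕ)).1.2 ≤ m' ∧ (b : (Θ × ℕ) × (Θ × ℕ)).2.2 ≤ n' ∧
        ((((b : (Θ × ℕ) × (Θ × ℕ)).1.1, m'), ((b : (Θ × ℕ) × (Θ × ℕ)).2.1, n')) ∈ A2 ∨
         (((b : (Θ × ℕ) × (Θ × ℕ)).2.1, n'), ((b : (Θ × ℕ) × (Θ × ℕ)).1.1, m')) ∈ A2) :=
      fun b => hBsub b.2
    choose m' n' hm hn hor using key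
    set w : ↥B → (Θ × ℕ) × (Θ × ℕ) := fun b =>
      if (((b : (Θ × ℕ) × (Θ × ℕ)).1.1, m' b), ((b : (Θ × ℕ) × (Θ × ℕ)).2.1, n' b)) ∈ A2
      then (((b : (Θ × ℕ) × (Θ × ℕ)).1.1, m' b), ((b : (Θ × ℕ) × (Θ × ℕ)).2.1, n' b))
      else (((b : (Θ × ℕ) × (Θ × ℕ)).2.1, n' b), ((b : (Θ × ℕ) × (Θ × ℕ)).1.1, m' b)) with hw
    have hwA : ∀ b, w b ∈ A2 := by
      intro b
      rw [hw]
      by_cases hcase :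
          (((b : (Θ × ℕ) × (Θ × ℕ)).1.1, m' b), ((b : (Θ × ℕ) × (Θ × ℕ)).2.1, n' b)) ∈ A2
      · simp [hcase]
      · simpa [hcase] using (hor b).resolve_left hcase
    have hrsub : Set.range w ⊆ A := by
      rintro q ⟨b, rfl⟩
      exact hA2A (hwA b)
    obtain ⟨g, f, hgf⟩ := hb (Set.range w) hrsub (lt_of_le_of_lt Cardinal.mk_range_le hBcard)
    refine ⟨fun x => max (g x) (f x), fun x => max (g x) (f x),
      Set.eq_empty_iff_forall_notMem.mpr ?_⟩
    rintro p ⟨hpB, hp1, hp2⟩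
    have hgf' := Set.eq_empty_iff_forall_notMem.mp hgf
    set b : ↥B := ⟨p, hpB⟩ with hbdef
    by_cases hcase : ((p.1.1, m' b), (p.2.1, n' b)) ∈ A2
    · refine hgf' ((p.1.1, m' b), (p.2.1, n' b)) ⟨⟨b, ?_⟩, ?_, ?_⟩
      · rw [hw]; exact if_pos hcase
      · exact lt_of_lt_of_le (lt_of_le_of_lt (le_max_left _ _) hp1) (hm b)
      · exact lt_of_lt_of_le (lt_of_le_of_lt (le_max_right _ _) hp2) (hn b)
    · refine hgf' ((p.2.1, n' b), (p.1.1, m' b)) ⟨⟨b, ?_⟩, ?_, ?_⟩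
      · rw [hw]; exact if_neg hcase
      · exact lt_of_lt_of_le (lt_of_le_of_lt (le_max_left _ _) hp2) (hn b)
      · exact lt_of_lt_of_le (lt_of_le_of_lt (le_max_right _ _) hp1) (hm b)
  · -- clause (c)
    intro E hE
    obtain ⟨g1, f1, h1⟩ := hc E hE
    obtain ⟨g2, f2, h2⟩ := hd E hE
    refine ⟨fun x => max (g1 x) (f2 x), fun x => max (f1 x) (g2 x),
      Set.eq_empty_iff_forall_notMem.mpr ?_⟩
    rintro p ⟨⟨⟨m', n', hm, hn, hor⟩, hpE⟩, hp1, hp2⟩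
    rcases hor with hL | hR
    · exact Set.eq_empty_iff_forall_notMem.mp h1 ((p.1.1, m'), (p.2.1, n'))
        ⟨⟨hA2A hL, hpE⟩,
          lt_of_lt_of_le (lt_of_le_of_lt (le_max_left _ _) hp1) hm,
          lt_of_lt_of_le (lt_of_le_of_lt (le_max_left _ _) hp2) hn⟩
    · exact Set.eq_empty_iff_forall_notMem.mp h2 ((p.2.1, n'), (p.1.1, m'))
        ⟨⟨hA2A hR, hpE⟩,
          lt_of_lt_of_le (lt_of_le_of_lt (le_max_right _ _) hp2) hn,
          lt_of_lt_of_le (lt_of_le_of_lt (le_max_right _ _) hp1) hm⟩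
  · -- clause (d)
    intro F hF
    obtain ⟨g1, f1, h1⟩ := hd F hF
    obtain ⟨g2, f2, h2⟩ := hc F hF
    refine ⟨fun x => max (g1 x) (f2 x), fun x => max (f1 x) (g2 x),
      Set.eq_empty_iff_forall_notMem.mpr ?_⟩
    rintro p ⟨⟨⟨m', n', hm, hn, hor⟩, hpF⟩, hp1, hp2⟩
    rcases hor with hL | hR
    · exact Set.eq_empty_iff_forall_notMem.mp h1 ((p.1.1, m'), (p.2.1, n'))
        ⟨⟨hA2A hL, hpF⟩,
          lt_of_lt_of_le (lt_of_le_of_lt (le_max_left _ _) hp1) hm,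
          lt_of_lt_of_le (lt_of_le_of_lt (le_max_left _ _) hp2) hn⟩
    · exact Set.eq_empty_iff_forall_notMem.mp h2 ((p.2.1, n'), (p.1.1, m'))
        ⟨⟨hA2A hR, hpF⟩,
          lt_of_lt_of_le (lt_of_le_of_lt (le_max_right _ _) hp2) hn,
          lt_of_lt_of_le (lt_of_le_of_lt (le_max_right _ _) hp1) hm⟩
  · -- H-set properties
    intro β α
    refine ⟨?_, ?_, ?_⟩
    · apply Set.Finite.subset
        ((Set.finite_Iic (max (gc α β) (fd α β))).prod
          (Set.finite_Iic (max (fd β α) (gc β α))))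
      rintro ⟨m, n⟩ ⟨m', n', hm, hn, hor⟩
      rcases hor with hL | hR
      · obtain ⟨h1, h2⟩ := hbound _ hL
        exact ⟨le_trans hm (le_trans h1 (le_max_left _ _)),
          le_trans hn (le_trans h2 (le_max_left _ _))⟩
      · obtain ⟨h1, h2⟩ := hbound _ hR
        exact ⟨le_trans hm (le_trans h2 (le_max_right _ _)),
          le_trans hn (le_trans h1 (le_max_right _ _))⟩
    · rintro m n m2 n2 ⟨m', n', hm, hn, hor⟩ hm2 hn2
      exact ⟨m', n', le_trans hm2 hm, le_trans hn2 hn, hor⟩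
    · ext ⟨m, n⟩
      constructor
      · rintro ⟨m', n', hm, hn, hor⟩
        exact ⟨n', m', hn, hm, hor.symm⟩
      · rintro ⟨m', n', hm, hn, hor⟩
        exact ⟨n', m', hn, hm, hor.symm⟩
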